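/- For any s, k ∈ ℕ there exists r ∈ ℕ with the following property: for every coloring c of the collection 𝔉_r of nonempty subsets of {1,…,r} with k colors, there exist nonempty sets α_1, …, α_s ⊆ {1,…,r} with max α_i < min α_{i+1} for 1 ≤ i < s such that c is constant on the collection of all unions ⋃_{i∈β} α_i over nonempty β ⊆ {1,…,s}. -/

import Mathlib

open Set

namespace FUPR

/-- binary support of a natural number -/
def supp (n : ℕ) : Finset ℕ := (Finset.range n).filter (fun i => n.testBit i)

lemma mem_supp {i n : ℕ} : i ∈ supp n ↔ n.testBit i = true := by
  simp only [supp, Finset.mem_filter, Finset.mem_range]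
  constructor
  · exact fun h => h.2
  · intro h
    exact ⟨lt_of_lt_of_le (Nat.lt_two_pow_self (n := i)) (Nat.ge_two_pow_of_testBit h), h⟩

lemma supp_zero : supp 0 = ∅ := rfl

lemma supp_nonempty {n : ℕ} (hn : 0 < n) : (supp n).Nonempty := by
  rw [Finset.nonempty_iff_ne_empty]
  intro h
  have : n = 0 := Nat.zero_of_testBit_eq_false (fun i => by
    by_contra hb
    have : i ∈ supp n := mem_supp.mpr (by simpa using hb)
    simp [h] at this)
  omega

lemma supp_lt {x d : ℕ} (hx : x < 2 ^ d) : ∀ i ∈ supp x, i < d := by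
  intro i hi
  by_contra h
  push_neg at h
  have : x.testBit i = false :=
    Nat.testBit_lt_two_pow (lt_of_lt_of_le hx (Nat.pow_le_pow_right (by norm_num) h))
  rw [mem_supp] at hi
  simp [this] at hi

lemma le_of_mem_supp_of_dvd {y d : ℕ} (hy : 2 ^ d ∣ y) : ∀ i ∈ supp y, d ≤ i := by
  obtain ⟨a, rfl⟩ := hy
  intro i hi
  by_contra h
  push_neg at h
  rw [mem_supp] at hi
  have h0 : (2 ^ d * a + 0).testBit i = if i < d then Nat.testBit 0 i else a.testBit (i - d) :=
    Nat.testBit_two_pow_mul_add a (Nat.two_pow_pos d) i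
  simp [h] at h0
  rw [h0] at hi
  simp at hi

lemma supp_add {x y d : ℕ} (hx : x < 2 ^ d) (hy : 2 ^ d ∣ y) :
    supp (x + y) = supp x ∪ supp y := by
  obtain ⟨a, rfl⟩ := hy
  ext i
  simp only [mem_supp, Finset.mem_union]
  have h1 : (2 ^ d * a + x).testBit i = if i < d then x.testBit i else a.testBit (i - d) :=
    Nat.testBit_two_pow_mul_add a hx i
  have h2 : (2 ^ d * a + 0).testBit i = if i < d then Nat.testBit 0 i else a.testBit (i - d) :=
    Nat.testBit_two_pow_mul_add a (Nat.two_pow_pos d) i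
  rw [Nat.add_zero] at h2
  rw [add_comm x, h1, h2]
  by_cases hid : i < d
  · simp [hid]
  · push_neg at hid
    have : x.testBit i = false :=
      Nat.testBit_lt_two_pow (lt_of_lt_of_le hx (Nat.pow_le_pow_right (by norm_num) hid))
    simp [hid, this, Nat.lt_irrefl]

lemma FS_pos : ∀ {a : Stream' ℕ} {m : ℕ}, m ∈ Hindman.FS a → (∀ n, 0 < a.get n) → 0 < m := by
  intro a m hm
  induction hm with
  | head' a => intro h; exact h 0
  | tail' a m h ih => intro hp; exact ih (fun n => hp (n + 1))
  | cons' a m h ih =>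
      intro hp
      have := ih (fun n => hp (n + 1))
      have h0 := hp 0
      change 0 < a.head + m
      omega

lemma exists_color {ι : Type*} {k : ℕ} (U : Ultrafilter ι) (f : ι → Fin k) :
    ∃ col, {i | f i = col} ∈ U := by
  by_contra h
  push_neg at h
  have hc : ∀ col : Fin k, {i | f i ≠ col} ∈ U := by
    intro col
    have := Ultrafilter.compl_mem_iff_notMem.mpr (h col)
    simpa [Set.compl_setOf] using this
  have h2 : (⋂ col : Fin k, {i | f i ≠ col}) ∈ U := Filter.iInter_mem.mpr hc
  obtain ⟨i, hi⟩ := Ultrafilter.nonempty_of_mem h2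
  exact (Set.mem_iInter.mp hi (f i)) rfl

lemma interval_sum_dvd (b : Stream' ℕ) (l d : ℕ) :
    ∃ t t', l ≤ t ∧ t < t' ∧ 2 ^ d ∣ ∑ i ∈ Finset.Ico t t', b.get i := by
  have hmap : ∀ j ∈ Finset.range (2 ^ d + 1),
      (∑ i ∈ Finset.Ico l (l + j), b.get i) % 2 ^ d ∈ Finset.range (2 ^ d) := by
    intro j _
    exact Finset.mem_range.mpr (Nat.mod_lt _ (Nat.two_pow_pos d))
  obtain ⟨j, hj, j', hj', hne, heq⟩ :=
    Finset.exists_ne_map_eq_of_card_lt_of_maps_to (by simp) hmap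
  have key : ∀ p q : ℕ, p < q →
      (∑ i ∈ Finset.Ico l (l + p), b.get i) % 2 ^ d
        = (∑ i ∈ Finset.Ico l (l + q), b.get i) % 2 ^ d →
      ∃ t t', l ≤ t ∧ t < t' ∧ 2 ^ d ∣ ∑ i ∈ Finset.Ico t t', b.get i := by
    intro p q hpq hmod
    refine ⟨l + p, l + q, Nat.le_add_right _ _, by omega, ?_⟩
    have hsum : (∑ i ∈ Finset.Ico l (l + p), b.get i)
        + ∑ i ∈ Finset.Ico (l + p) (l + q), b.get i
        = ∑ i ∈ Finset.Ico l (l + q), b.get i :=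
      Finset.sum_Ico_consecutive _ (by omega) (by omega)
    have hle : (∑ i ∈ Finset.Ico l (l + p), b.get i) ≤ ∑ i ∈ Finset.Ico l (l + q), b.get i := by
      omega
    have := (Nat.modEq_iff_dvd' hle).mp hmod
    have heq2 : (∑ i ∈ Finset.Ico l (l + q), b.get i)
        - ∑ i ∈ Finset.Ico l (l + p), b.get i = ∑ i ∈ Finset.Ico (l + p) (l + q), b.get i := by
      omega
    rwa [heq2] at this
  rcases hne.lt_or_gt with h | h
  · exact key j j' h heq
  · exact key j' j h heq.symm

/-- iterate a function on pairs starting from `(0,0)` -/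
def iter (f : ℕ × ℕ → ℕ × ℕ) : ℕ → ℕ × ℕ
  | 0 => (0, 0)
  | j + 1 => f (iter f j)

lemma infinite_case (s k : ℕ) (c : Finset ℕ → Fin k) :
    ∃ α : Fin s → Finset ℕ,
      (∀ i, (α i).Nonempty) ∧
      (∀ i, ∀ a ∈ α i, 1 ≤ a) ∧
      (∀ i j : Fin s, i < j → ∀ a ∈ α i, ∀ b ∈ α j, a < b) ∧
      ∃ col : Fin k, ∀ β : Finset (Fin s), β.Nonempty → c (β.biUnion α) = col := by
  classical
  obtain ⟨U, Uidem, hUa⟩ :=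
    Hindman.exists_idempotent_ultrafilter_le_FS ((fun n => 2 ^ n) : Stream' ℕ)
  obtain ⟨col, hcol⟩ := exists_color U (fun n => c ((supp n).image (· + 1)))
  have hs0 : ({n | c ((supp n).image (· + 1)) = col}
      ∩ {m | m ∈ Hindman.FS ((fun n => 2 ^ n) : Stream' ℕ)}) ∈ U :=
    Filter.inter_mem hcol hUa
  obtain ⟨b, hb⟩ := Hindman.exists_FS_of_large U Uidem _ hs0
  have hapos : ∀ n, 0 < Stream'.get ((fun n => 2 ^ n) : Stream' ℕ) n := by
    intro n
    exact Nat.two_pow_pos n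
  have hbcol : ∀ m ∈ Hindman.FS b, c ((supp m).image (· + 1)) = col := fun m hm => (hb hm).1
  have hbFSpos : ∀ m ∈ Hindman.FS b, 0 < m := fun m hm => FS_pos (hb hm).2 hapos
  have hbpos : ∀ n, 0 < b.get n := fun n => hbFSpos _ (Hindman.FS.singleton b n)
  choose T T' hT hTT' hdvd using interval_sum_dvd b
  set D : ℕ → ℕ := fun u => (∑ i ∈ Finset.range u, b.get i) + 1 with hD
  set G : ℕ → ℕ × ℕ := iter (fun p => (T p.2 (D p.2), T' p.2 (D p.2))) with hG
  set y : ℕ → ℕ := fun m => ∑ i ∈ Finset.Ico (G (m + 1)).1 (G (m + 1)).2, b.get i with hy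
  have hG0 : G 0 = (0, 0) := rfl
  have hGsucc : ∀ m, G (m + 1) = (T (G m).2 (D (G m).2), T' (G m).2 (D (G m).2)) :=
    fun m => rfl
  have I1 : ∀ m, (G m).2 ≤ (G (m + 1)).1 := fun m => by rw [hGsucc]; exact hT _ _
  have I2 : ∀ m, (G (m + 1)).1 < (G (m + 1)).2 := fun m => by rw [hGsucc]; exact hTT' _ _
  have I3 : ∀ m, 2 ^ (D (G m).2) ∣ y m := fun m => by
    rw [hy]
    simp only []
    rw [hGsucc]
    exact hdvd _ _
  have umono : Monotone (fun m => (G m).2) :=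
    monotone_nat_of_le_succ (fun m => le_trans (I1 m) (le_of_lt (I2 m)))
  have B : ∀ m, (∑ j ∈ Finset.range m, y j) ≤ ∑ i ∈ Finset.range (G m).2, b.get i := by
    intro m
    induction m with
    | zero => simp [hG0]
    | succ m ih =>
        rw [Finset.sum_range_succ]
        have h1 : y m ≤ ∑ i ∈ Finset.Ico (G m).2 (G (m + 1)).2, b.get i := by
          rw [hy]
          exact Finset.sum_le_sum_of_subset (Finset.Ico_subset_Ico (I1 m) le_rfl)
        have h2 : (∑ i ∈ Finset.range (G m).2, b.get i)
            + ∑ i ∈ Finset.Ico (G m).2 (G (m + 1)).2, b.get i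
            = ∑ i ∈ Finset.range (G (m + 1)).2, b.get i := by
          rw [Finset.range_eq_Ico, Finset.range_eq_Ico]
          exact Finset.sum_Ico_consecutive (fun i => b.get i) (Nat.zero_le _) (show (G m).2 ≤ (G (m + 1)).2 from umono (Nat.le_succ m))
        omega
  have Bβ : ∀ (β : Finset ℕ) (m : ℕ), (∀ j ∈ β, j < m) →
      (∑ j ∈ β, y j) < 2 ^ (D (G m).2) := by
    intro β m hβ
    have h1 : (∑ j ∈ β, y j) ≤ ∑ j ∈ Finset.range m, y j :=
      Finset.sum_le_sum_of_subset (fun j hj => Finset.mem_range.mpr (hβ j hj))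
    have h2 := B m
    have h3 : D (G m).2 < 2 ^ (D (G m).2) := Nat.lt_two_pow_self
    have h4 : (∑ i ∈ Finset.range (G m).2, b.get i) < D (G m).2 := Nat.lt_succ_self _
    omega
  have L2 : ∀ β : Finset ℕ, supp (∑ j ∈ β, y j) = β.biUnion (fun j => supp (y j)) := by
    intro β
    induction β using Finset.induction_on_max with
    | empty => simp [supp_zero]
    | insert a β hβ ih =>
        have hna : a ∉ β := fun h => lt_irrefl a (hβ a h)
        rw [Finset.sum_insert hna, Finset.biUnion_insert, add_comm,
          supp_add (Bβ β a hβ) (I3 a), ih, Finset.union_comm]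
  have O : ∀ m m' : ℕ, m < m' → ∀ i ∈ supp (y m), ∀ i' ∈ supp (y m'), i < i' := by
    intro m m' hmm' i hi i' hi'
    have h1 : y m < 2 ^ (D (G m').2) := by
      have := Bβ {m} m' (by simpa using hmm')
      simpa using this
    have h2 := supp_lt h1 i hi
    have h3 := le_of_mem_supp_of_dvd (I3 m') i' hi'
    omega
  have Mβ : ∀ β : Finset ℕ, β.Nonempty → (∑ j ∈ β, y j) ∈ Hindman.FS b := by
    intro β hβne
    have hdisj : (↑β : Set ℕ).PairwiseDisjoint
        (fun j => Finset.Ico (G (j + 1)).1 (G (j + 1)).2) := by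
      have key : ∀ j j' : ℕ, j < j' →
          Disjoint (Finset.Ico (G (j + 1)).1 (G (j + 1)).2)
            (Finset.Ico (G (j' + 1)).1 (G (j' + 1)).2) := by
        intro j j' hjj'
        have hle : (G (j + 1)).2 ≤ (G (j' + 1)).1 :=
          le_trans (umono (by omega : j + 1 ≤ j')) (I1 j')
        rw [Finset.disjoint_left]
        intro x hx hx'
        rw [Finset.mem_Ico] at hx hx'
        omega
      intro j _ j' _ hne
      rcases hne.lt_or_gt with h | h
      · exact key _ _ h
      · exact (key _ _ h).symm
    have hsum : (∑ j ∈ β, y j)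
        = ∑ i ∈ β.biUnion (fun j => Finset.Ico (G (j + 1)).1 (G (j + 1)).2), b.get i :=
      (Finset.sum_biUnion hdisj).symm
    rw [hsum]
    apply Hindman.FS.finset_sum
    obtain ⟨j, hj⟩ := hβne
    exact ⟨(G (j + 1)).1, Finset.mem_biUnion.mpr
      ⟨j, hj, Finset.mem_Ico.mpr ⟨le_rfl, I2 j⟩⟩⟩
  have hypos : ∀ m, 0 < y m := by
    intro m
    have h := Mβ {m} (Finset.singleton_nonempty _)
    rw [Finset.sum_singleton] at h
    exact hbFSpos _ h
  refine ⟨fun j => (supp (y j.val)).image (· + 1), ?_, ?_, ?_, col, ?_⟩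
  · intro i
    exact (supp_nonempty (hypos i.val)).image _
  · intro i x hx
    simp only [Finset.mem_image] at hx
    obtain ⟨w, _, rfl⟩ := hx
    omega
  · intro i j hij x hx x' hx'
    simp only [Finset.mem_image] at hx hx'
    obtain ⟨w, hw, rfl⟩ := hx
    obtain ⟨w', hw', rfl⟩ := hx'
    have := O i.val j.val hij w hw w' hw'
    omega
  · intro β hβ
    have hval : β.biUnion (fun j => (supp (y j.val)).image (· + 1))
        = (supp (∑ j ∈ β.image Fin.val, y j)).image (· + 1) := by
      rw [L2]
      ext x
      simp only [Finset.mem_biUnion, Finset.mem_image]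
      constructor
      · rintro ⟨j, hj, w, hw, rfl⟩
        exact ⟨w, ⟨j.val, ⟨j, hj, rfl⟩, hw⟩, rfl⟩
      · rintro ⟨w, ⟨m, ⟨j, hj, rfl⟩, hw⟩, rfl⟩
        exact ⟨j, hj, w, hw, rfl⟩
    have hmem : (∑ j ∈ β.image Fin.val, y j) ∈ Hindman.FS b :=
      Mβ _ (hβ.image _)
    rw [hval]
    exact hbcol _ hmem

end FUPR

/-- For any `s, k` there is `r` such that any `k`-coloring of the nonempty subsets of
`{1,…,r}` admits nonempty sets `α₁ < ⋯ < α_s ⊆ {1,…,r}` (each element of `α_i` is smaller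
than each element of `α_j` for `i < j`) all of whose finite unions get the same color. -/
theorem finite_unions_partition_regular (s k : ℕ) :
    ∃ r : ℕ, ∀ c : Finset ℕ → Fin k,
      ∃ α : Fin s → Finset ℕ,
        (∀ i, (α i).Nonempty) ∧
        (∀ i, α i ⊆ Finset.Icc 1 r) ∧
        (∀ i j : Fin s, i < j → ∀ a ∈ α i, ∀ b ∈ α j, a < b) ∧
        ∃ col : Fin k, ∀ β : Finset (Fin s), β.Nonempty → c (β.biUnion α) = col := by
  classical
  by_contra h
  have h' : ∀ r : ℕ, ∃ c : Finset ℕ → Fin k,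
      ¬ ∃ α : Fin s → Finset ℕ,
        (∀ i, (α i).Nonempty) ∧
        (∀ i, α i ⊆ Finset.Icc 1 r) ∧
        (∀ i j : Fin s, i < j → ∀ a ∈ α i, ∀ b ∈ α j, a < b) ∧
        ∃ col : Fin k, ∀ β : Finset (Fin s), β.Nonempty → c (β.biUnion α) = col :=
    fun r => not_forall.mp (fun hall => h ⟨r, hall⟩)
  choose cc hcc using h'
  obtain ⟨α, hne, hge1, hord, col, hcol⟩ :=
    FUPR.infinite_case s k
      (fun A => (FUPR.exists_color (Filter.hyperfilter ℕ) (fun r => cc r A)).choose)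
  set chat : Finset ℕ → Fin k :=
    fun A => (FUPR.exists_color (Filter.hyperfilter ℕ) (fun r => cc r A)).choose with hchat
  have hchatspec : ∀ A : Finset ℕ, {r | cc r A = chat A} ∈ Filter.hyperfilter ℕ :=
    fun A => (FUPR.exists_color (Filter.hyperfilter ℕ) (fun r => cc r A)).choose_spec
  set N : ℕ := Finset.univ.sup (fun i : Fin s => (α i).sup id) with hN
  have h1 : {r : ℕ | N ≤ r} ∈ Filter.hyperfilter ℕ :=
    Nat.hyperfilter_le_atTop (Filter.mem_atTop N)
  have h2 : (⋂ β : Finset (Fin s), {r | cc r (β.biUnion α) = chat (β.biUnion α)})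
      ∈ Filter.hyperfilter ℕ :=
    Filter.iInter_mem.mpr (fun β => hchatspec _)
  obtain ⟨r, hr⟩ := Ultrafilter.nonempty_of_mem (Filter.inter_mem h1 h2)
  apply hcc r
  refine ⟨α, hne, ?_, hord, col, ?_⟩
  · intro i a ha
    rw [Finset.mem_Icc]
    refine ⟨hge1 i a ha, ?_⟩
    have ha1 : a ≤ (α i).sup id := Finset.le_sup (f := id) ha
    have ha2 : (α i).sup id ≤ N := Finset.le_sup (f := fun i : Fin s => (α i).sup id) (Finset.mem_univ i)
    exact le_trans (le_trans ha1 ha2) hr.1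
  · intro β hβ
    have hag : cc r (β.biUnion α) = chat (β.biUnion α) := Set.mem_iInter.mp hr.2 β
    rw [hag]
    exact hcol β hβ
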